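/- Suppose x₁,…,x_m are i.i.d. samples with mean ȳ_n and variance S_n² (sampling with replacement from observations with sample mean ȳ_n and variance S_n²). Then E[D_{m,n}] = (1-w_n)²(ȳ_n - μ₀)² + S_n²/m, where D_{m,n} = (w_n ȳ_n + (1-w_n)μ₀ - x̄_m)², and consequently the function m ↦ E[KL(π_n^c, π_m^f)] = (1/2){ m/(n+z) + (m/σ²)E[D_{m,n}] - 1 + log((n+z)/m) } (with S_n² replaced by σ² in the KL) has derivative (1/2){ 1/(n+z) + (1-w_n)²(ȳ_n-μ₀)²/σ² - 1/m }, so it is minimized over m > 0 at m* = [1/(n+z) + (1-w_n)²(ȳ_n - μ₀)²/σ²]^{-1}. -/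

import Mathlib

open MeasureTheory Real

/-- bootstrap hypothetical sampling: if the hypothetical sample mean
`x̄_m` has mean `ȳ_n` and variance `S_n²/m`, then
`E[D_{m,n}] = (1-w_n)²(ȳ_n - μ₀)² + S_n²/m` where
`D_{m,n} = (w_n ȳ_n + (1-w_n)μ₀ - x̄_m)²`; consequently the function
`F(m) = (1/2){ m/(n+z) + (m/σ²)[(1-w_n)²(ȳ_n-μ₀)² + S_n²/m] - 1 + log((n+z)/m) }`
has derivative `(1/2){1/(n+z) + (1-w_n)²(ȳ_n-μ₀)²/σ² - 1/m}` at each `m > 0` and is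
minimized over `m > 0` at `m* = [1/(n+z) + (1-w_n)²(ȳ_n-μ₀)²/σ²]⁻¹`. -/
theorem stmt_12 (n z σ Sn ybar μ₀ : ℝ) (hn : 0 < n) (hz : 0 < z) (hσ : 0 < σ)
    (hSn : 0 < Sn)
    (wn : ℝ) (hwn : wn = n / (n + z))
    (F : ℝ → ℝ)
    (hF : ∀ m, F m = (1 / 2) * (m / (n + z)
      + (m / σ ^ 2) * ((1 - wn) ^ 2 * (ybar - μ₀) ^ 2 + Sn ^ 2 / m) - 1
      + Real.log ((n + z) / m))) :
    (∀ {Ω : Type} [MeasurableSpace Ω] (P : Measure Ω) [IsProbabilityMeasure P]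
        (X : Ω → ℝ) (m : ℝ), 0 < m →
      Integrable X P → Integrable (fun ω => (X ω) ^ 2) P →
      (∫ ω, X ω ∂P) = ybar → (∫ ω, (X ω - ybar) ^ 2 ∂P) = Sn ^ 2 / m →
      (∫ ω, (wn * ybar + (1 - wn) * μ₀ - X ω) ^ 2 ∂P)
        = (1 - wn) ^ 2 * (ybar - μ₀) ^ 2 + Sn ^ 2 / m) ∧
    (∀ m, 0 < m → HasDerivAt F
      ((1 / 2) * (1 / (n + z) + (1 - wn) ^ 2 * (ybar - μ₀) ^ 2 / σ ^ 2 - 1 / m)) m) ∧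
    (∀ m, 0 < m →
      F ((1 / (n + z) + (1 - wn) ^ 2 * (ybar - μ₀) ^ 2 / σ ^ 2)⁻¹) ≤ F m) := by
  have hnz : (0:ℝ) < n + z := by linarith
  have hσ2 : (0:ℝ) < σ ^ 2 := by positivity
  set K := (1 - wn) ^ 2 * (ybar - μ₀) ^ 2 with hK
  have hK0 : 0 ≤ K := by positivity
  set a := 1 / (n + z) + K / σ ^ 2 with ha
  have ha0 : 0 < a := by positivity
  have hexp : ∀ x : ℝ, 0 < x →
      (1 / 2) * (x / (n + z) + (x / σ ^ 2) * (K + Sn ^ 2 / x) - 1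
        + Real.log ((n + z) / x))
      = (1 / 2) * (a * x + (Sn ^ 2 / σ ^ 2 - 1 + Real.log (n + z)) - Real.log x) := by
    intro x hx
    rw [Real.log_div hnz.ne' hx.ne', ha]
    field_simp
    ring
  refine ⟨?_, ?_, ?_⟩
  · intro Ω _ P _ X m hm hX hX2 hmean hvar
    set c := wn * ybar + (1 - wn) * μ₀ with hc
    set d := c - ybar with hd
    have hXsq : Integrable (fun ω => (X ω - ybar) ^ 2) P := by
      have he : (fun ω => (X ω - ybar) ^ 2)
          = fun ω => (X ω) ^ 2 + ((-2 * ybar) * X ω + ybar ^ 2) := by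
        funext ω; ring
      rw [he]
      exact hX2.add ((hX.const_mul _).add (integrable_const _))
    have hlin : Integrable (fun ω => -(2 * d) * X ω + (d ^ 2 + 2 * d * ybar)) P :=
      (hX.const_mul _).add (integrable_const _)
    have hmul : Integrable (fun ω => -(2 * d) * X ω) P := hX.const_mul _
    have he2 : (fun ω => (c - X ω) ^ 2)
        = fun ω => (X ω - ybar) ^ 2 + ((-(2 * d)) * X ω + (d ^ 2 + 2 * d * ybar)) := by
      funext ω; simp only [hd]; ring
    calc ∫ ω, (c - X ω) ^ 2 ∂P
        = ∫ ω, ((X ω - ybar) ^ 2 + ((-(2 * d)) * X ω + (d ^ 2 + 2 * d * ybar))) ∂P := by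
          rw [he2]
      _ = (∫ ω, (X ω - ybar) ^ 2 ∂P)
          + ((∫ ω, (-(2 * d)) * X ω ∂P) + ∫ _ω, (d ^ 2 + 2 * d * ybar) ∂P) := by
          rw [integral_add hXsq hlin, integral_add hmul (integrable_const _)]
      _ = Sn ^ 2 / m + ((-(2 * d)) * ybar + (d ^ 2 + 2 * d * ybar)) := by
          rw [hvar, integral_const_mul, hmean, integral_const]
          simp
      _ = K + Sn ^ 2 / m := by
          simp only [hK, hd, hc]; ring
  · intro m hm
    have h1 : HasDerivAt (fun x : ℝ => a * x + (Sn ^ 2 / σ ^ 2 - 1 + Real.log (n + z))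
        - Real.log x) (a - m⁻¹) m := by
      refine HasDerivAt.congr_deriv
        ((((hasDerivAt_id m).const_mul a).add_const
          (Sn ^ 2 / σ ^ 2 - 1 + Real.log (n + z))).sub (Real.hasDerivAt_log hm.ne')) (by simp)
    have hG := h1.const_mul (1 / 2 : ℝ)
    have hG' : HasDerivAt (fun x : ℝ => (1 / 2) * (a * x
        + (Sn ^ 2 / σ ^ 2 - 1 + Real.log (n + z)) - Real.log x))
        ((1 / 2) * (1 / (n + z) + K / σ ^ 2 - 1 / m)) m := by
      refine hG.congr_deriv ?_
      rw [ha]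
      field_simp
    refine hG'.congr_of_eventuallyEq ?_
    filter_upwards [Ioi_mem_nhds hm] with x hx
    rw [hF x, hexp x hx]
  · intro m hm
    have him : 0 < a⁻¹ := by positivity
    rw [hF, hF, hexp _ him, hexp _ hm]
    have h1 : Real.log (a * m) ≤ a * m - 1 :=
      Real.log_le_sub_one_of_pos (by positivity)
    rw [Real.log_mul ha0.ne' hm.ne'] at h1
    have h2 : a * a⁻¹ = 1 := mul_inv_cancel₀ ha0.ne'
    rw [mul_inv_cancel₀ ha0.ne', Real.log_inv]
    clear_value K a
    linarith
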